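/- arXiv:2510.27302 — 2 statements merged into one kernel-verified Lean document; each statement's English description precedes it below -/
import Mathlib

section
/- Let X be a real Banach space, let u* ∈ X, let r > 0, and let F : X → X be Fréchet differentiable on the open ball B(u*, r) with F(u*) = 0. Suppose the Fréchet derivative F' is Lipschitz continuous on B(u*, r) with constant L ≥ 0 (i.e., ‖F'(u₁) − F'(u₂)‖ ≤ L‖u₁ − u₂‖ for all u₁, u₂ ∈ B(u*, r)), and suppose M > 0 is such that for every n the derivative F'(uₙ) at the n-th Newton iterate admits a bounded inverse with ‖[F'(uₙ)]⁻¹‖ ≤ M. If the initial point u₀ ∈ B(u*, r) satisfies L·M·‖u₀ − u*‖ < 1 (and the iterates remain in B(u*, r)), then the Newton–Kantorovich iteration u_{n+1} = uₙ − [F'(uₙ)]⁻¹ F(uₙ) satisfies ‖u_{n+1} − u*‖ ≤ (L·M/2)·‖uₙ − u*‖² for all n, and consequently uₙ converges to u*. -/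
open Metric Filter Set

lemma taylor_key {X : Type*} [NormedAddCommGroup X] [NormedSpace ℝ X]
    {F : X → X} {F' : X → X →L[ℝ] X} {s : Set X} (hs : Convex ℝ s)
    (hdiff : ∀ x ∈ s, HasFDerivAt F (F' x) x)
    {L : ℝ}
    (hLip : ∀ u₁ ∈ s, ∀ u₂ ∈ s, ‖F' u₁ - F' u₂‖ ≤ L * ‖u₁ - u₂‖)
    {a b : X} (ha : a ∈ s) (hb : b ∈ s) :
    ‖F b - F a - F' a (b - a)‖ ≤ L / 2 * ‖b - a‖ ^ 2 := by
  set d := b - a with hd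
  have hmem : ∀ t ∈ Icc (0:ℝ) 1, a + t • d ∈ s := by
    intro t ht
    have : a + t • d = (1 - t) • a + t • b := by
      rw [hd]; module
    rw [this]
    exact hs ha hb (by linarith [ht.2]) ht.1 (by ring)
  set g : ℝ → X := fun t => F (a + t • d) - F a - t • (F' a d) with hg
  have hg' : ∀ t ∈ Icc (0:ℝ) 1,
      HasDerivAt g (F' (a + t • d) d - F' a d) t := by
    intro t ht
    have h1 : HasDerivAt (fun t : ℝ => a + t • d) d t := by
      simpa [Pi.add_def] using (hasDerivAt_const t a).add ((hasDerivAt_id t).smul_const d)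
    have h2 : HasDerivAt (fun t : ℝ => F (a + t • d)) (F' (a + t • d) d) t :=
      (hdiff _ (hmem t ht)).comp_hasDerivAt t h1
    simpa [hg, Pi.sub_def] using (h2.sub (hasDerivAt_const t (F a))).sub
      ((hasDerivAt_id t).smul_const (F' a d))
  have hB : ∀ t : ℝ, HasDerivAt (fun t : ℝ => L * ‖d‖ ^ 2 * t ^ 2 / 2)
      (L * ‖d‖ ^ 2 * t) t := by
    intro t
    have : HasDerivAt (fun t : ℝ => L * ‖d‖ ^ 2 * t ^ 2 / 2)
        (L * ‖d‖ ^ 2 * (↑2 * t ^ 1) / 2) t :=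
      ((hasDerivAt_pow 2 t).const_mul (L * ‖d‖ ^ 2)).div_const 2
    convert this using 1; ring
  have hbound : ∀ t ∈ Ico (0:ℝ) 1,
      ‖F' (a + t • d) d - F' a d‖ ≤ L * ‖d‖ ^ 2 * t := by
    intro t ht
    have h1 : ‖F' (a + t • d) d - F' a d‖ ≤ ‖F' (a + t • d) - F' a‖ * ‖d‖ := by
      simpa using (F' (a + t • d) - F' a).le_opNorm d
    have h2 : ‖F' (a + t • d) - F' a‖ ≤ L * ‖t • d‖ := by
      simpa using hLip _ (hmem t (Ico_subset_Icc_self ht)) _ (hmem 0 (by norm_num))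
    have h3 : ‖t • d‖ = t * ‖d‖ := by
      rw [norm_smul, Real.norm_of_nonneg ht.1]
    calc ‖F' (a + t • d) d - F' a d‖ ≤ (L * (t * ‖d‖)) * ‖d‖ := by
          refine h1.trans ?_
          exact mul_le_mul_of_nonneg_right (h2.trans_eq (by rw [h3])) (norm_nonneg d)
      _ = L * ‖d‖ ^ 2 * t := by ring
  have key : ∀ ⦃x : ℝ⦄, x ∈ Icc (0:ℝ) 1 → ‖g x‖ ≤ L * ‖d‖ ^ 2 * x ^ 2 / 2 :=
    image_norm_le_of_norm_deriv_right_le_deriv_boundary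
      (fun t ht => (hg' t ht).continuousAt.continuousWithinAt)
      (fun t ht => (hg' t (Ico_subset_Icc_self ht)).hasDerivWithinAt)
      (by simp [hg]) hB hbound
  have := key (show (1:ℝ) ∈ Icc (0:ℝ) 1 by norm_num)
  have heq : g 1 = F b - F a - F' a (b - a) := by
    simp [hg, hd]
  rw [heq] at this
  calc ‖F b - F a - F' a (b - a)‖ ≤ L * ‖d‖ ^ 2 * 1 ^ 2 / 2 := this
    _ = L / 2 * ‖b - a‖ ^ 2 := by rw [hd]; ring

/-- Quadratic error bound and convergence of the Newton–Kantorovich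
iteration in a real Banach space. -/
theorem newton_kantorovich_quadratic_convergence
    {X : Type*} [NormedAddCommGroup X] [NormedSpace ℝ X] [CompleteSpace X]
    (F : X → X) (F' : X → X →L[ℝ] X) (ustar : X) (r : ℝ) (hr : 0 < r)
    (hdiff : ∀ x ∈ ball ustar r, HasFDerivAt F (F' x) x)
    (hFstar : F ustar = 0)
    (L : ℝ) (hL : 0 ≤ L)
    (hLip : ∀ u₁ ∈ ball ustar r, ∀ u₂ ∈ ball ustar r,
      ‖F' u₁ - F' u₂‖ ≤ L * ‖u₁ - u₂‖)
    (M : ℝ) (hM : 0 < M)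
    (u : ℕ → X) (A : ℕ → X →L[ℝ] X)
    (hinvL : ∀ n, (A n).comp (F' (u n)) = ContinuousLinearMap.id ℝ X)
    (hinvR : ∀ n, (F' (u n)).comp (A n) = ContinuousLinearMap.id ℝ X)
    (hAnorm : ∀ n, ‖A n‖ ≤ M)
    (hball : ∀ n, u n ∈ ball ustar r)
    (h0 : L * M * ‖u 0 - ustar‖ < 1)
    (hiter : ∀ n, u (n + 1) = u n - A n (F (u n))) :
    (∀ n, ‖u (n + 1) - ustar‖ ≤ (L * M / 2) * ‖u n - ustar‖ ^ 2) ∧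
      Tendsto u atTop (nhds ustar) := by
  have hconv : Convex ℝ (ball ustar r) := convex_ball _ _
  have hquad : ∀ n, ‖u (n + 1) - ustar‖ ≤ (L * M / 2) * ‖u n - ustar‖ ^ 2 := by
    intro n
    have hT := taylor_key hconv hdiff hLip (hball n) (mem_ball_self hr)
    have hA : A n (F' (u n) (ustar - u n)) = ustar - u n := by
      have := congrArg (fun T : X →L[ℝ] X => T (ustar - u n)) (hinvL n)
      simpa using this
    have heq : u (n + 1) - ustar
        = A n (F ustar - F (u n) - F' (u n) (ustar - u n)) := by
      rw [hiter n, hFstar]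
      rw [map_sub, map_sub, hA, map_zero]
      abel
    rw [heq]
    calc ‖A n (F ustar - F (u n) - F' (u n) (ustar - u n))‖
        ≤ ‖A n‖ * ‖F ustar - F (u n) - F' (u n) (ustar - u n)‖ :=
          (A n).le_opNorm _
      _ ≤ M * (L / 2 * ‖ustar - u n‖ ^ 2) := by
          apply mul_le_mul (hAnorm n) hT (norm_nonneg _) hM.le
      _ = (L * M / 2) * ‖u n - ustar‖ ^ 2 := by
          rw [norm_sub_rev]; ring
  refine ⟨hquad, ?_⟩
  set c : ℝ := L * M * ‖u 0 - ustar‖ / 2 with hc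
  have hc0 : 0 ≤ c := by positivity
  have hc1 : c < 1 := by
    have : 0 ≤ L * M * ‖u 0 - ustar‖ := by positivity
    linarith
  have hgeo : ∀ n, ‖u n - ustar‖ ≤ c ^ n * ‖u 0 - ustar‖ := by
    intro n
    induction n with
    | zero => simp
    | succ n ih =>
      have hcn : c ^ n ≤ 1 := pow_le_one₀ hc0 (by linarith)
      have hle0 : ‖u n - ustar‖ ≤ ‖u 0 - ustar‖ :=
        ih.trans (by nlinarith [norm_nonneg (u 0 - ustar)])
      have := hquad n
      have hnn : (0:ℝ) ≤ ‖u n - ustar‖ := norm_nonneg _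
      calc ‖u (n + 1) - ustar‖ ≤ (L * M / 2) * ‖u n - ustar‖ ^ 2 := hquad n
        _ ≤ (L * M / 2) * (‖u 0 - ustar‖ * (c ^ n * ‖u 0 - ustar‖)) := by
            apply mul_le_mul_of_nonneg_left _ (by positivity)
            calc ‖u n - ustar‖ ^ 2 = ‖u n - ustar‖ * ‖u n - ustar‖ := sq _
              _ ≤ ‖u 0 - ustar‖ * (c ^ n * ‖u 0 - ustar‖) :=
                  mul_le_mul hle0 ih hnn (norm_nonneg _)
        _ = c ^ (n + 1) * ‖u 0 - ustar‖ := by rw [hc]; ring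
  rw [tendsto_iff_norm_sub_tendsto_zero]
  apply squeeze_zero (fun n => norm_nonneg _) hgeo
  have := (tendsto_pow_atTop_nhds_zero_of_lt_one hc0 hc1).mul_const ‖u 0 - ustar‖
  simpa using this
end

section
/- Let X be a real Banach space, let u* ∈ X with F(u*) = 0, where F : X → X is Fréchet differentiable on the ball B(u*, r) with F' Lipschitz continuous there with constant L > 0, and suppose F'(u*) admits a bounded inverse with ‖[F'(u*)]⁻¹‖ ≤ M. Then u* is the unique zero of F in the ball B(u*, ρ) for any ρ ≤ min(r, 2/(L M)): if û ∈ B(u*, ρ) satisfies F(û) = 0, then û = u*. -/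
open Metric

/-- Local uniqueness of the zero `u*` of `F` in the ball of radius
`ρ ≤ min(r, 2/(L M))`. -/
theorem newton_kantorovich_local_uniqueness
    {X : Type*} [NormedAddCommGroup X] [NormedSpace ℝ X] [CompleteSpace X]
    (F : X → X) (F' : X → X →L[ℝ] X) (ustar : X) (r : ℝ) (hr : 0 < r)
    (hdiff : ∀ x ∈ ball ustar r, HasFDerivAt F (F' x) x)
    (hFstar : F ustar = 0)
    (L : ℝ) (hL : 0 < L)
    (hLip : ∀ u₁ ∈ ball ustar r, ∀ u₂ ∈ ball ustar r,
      ‖F' u₁ - F' u₂‖ ≤ L * ‖u₁ - u₂‖)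
    (A : X →L[ℝ] X)
    (hinvL : A.comp (F' ustar) = ContinuousLinearMap.id ℝ X)
    (hinvR : (F' ustar).comp A = ContinuousLinearMap.id ℝ X)
    (M : ℝ) (hAnorm : ‖A‖ ≤ M)
    (ρ : ℝ) (hρ : ρ ≤ min r (2 / (L * M)))
    (uhat : X) (huhat : uhat ∈ ball ustar ρ) (hFhat : F uhat = 0) :
    uhat = ustar := by
  set v := uhat - ustar with hv
  by_contra hne
  have hvne : v ≠ 0 := sub_ne_zero.mpr hne
  have hvpos : 0 < ‖v‖ := norm_pos_iff.mpr hvne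
  have hvρ : ‖v‖ < ρ := by simpa [hv, dist_eq_norm] using huhat
  have hρr : ρ ≤ r := hρ.trans (min_le_left _ _)
  have hmem : ∀ t : ℝ, t ∈ Set.Icc (0:ℝ) 1 → ustar + t • v ∈ ball ustar r := by
    intro t ht
    have : ‖t • v‖ = t * ‖v‖ := by
      rw [norm_smul, Real.norm_of_nonneg ht.1]
    have h1 : t * ‖v‖ ≤ ‖v‖ := by
      nlinarith [ht.1, ht.2, hvpos]
    simp only [mem_ball, dist_eq_norm, add_sub_cancel_left]
    calc ‖t • v‖ = t * ‖v‖ := this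
      _ ≤ ‖v‖ := h1
      _ < ρ := hvρ
      _ ≤ r := hρr
  -- g t = F (ustar + t • v) - t • (F' ustar v)
  set g : ℝ → X := fun t => F (ustar + t • v) - t • (F' ustar v) with hg
  have hgderiv : ∀ t ∈ Set.Icc (0:ℝ) 1,
      HasDerivAt g (F' (ustar + t • v) v - F' ustar v) t := by
    intro t ht
    have h1 : HasDerivAt (fun t : ℝ => ustar + t • v) v t := by
      simpa using ((hasDerivAt_id t).smul_const v).const_add ustar
    have h2 : HasDerivAt (fun t : ℝ => F (ustar + t • v)) (F' (ustar + t • v) v) t :=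
      (hdiff _ (hmem t ht)).comp_hasDerivAt t h1
    have h3 : HasDerivAt (fun t : ℝ => t • (F' ustar v)) (F' ustar v) t := by
      simpa using (hasDerivAt_id t).smul_const (F' ustar v)
    exact h2.sub h3
  have key : ‖g 1‖ ≤ L * ‖v‖ ^ 2 * 1 ^ 2 / 2 := by
    have hcont : ContinuousOn g (Set.Icc 0 1) := fun t ht =>
      (hgderiv t ht).continuousAt.continuousWithinAt
    have hB : ∀ t : ℝ, HasDerivAt (fun s => L * ‖v‖ ^ 2 * s ^ 2 / 2)
        (L * ‖v‖ ^ 2 * t) t := by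
      intro t
      have := ((hasDerivAt_pow 2 t).const_mul (L * ‖v‖ ^ 2)).div_const 2
      exact this.congr_deriv (by push_cast; ring)
    have hbound : ∀ t ∈ Set.Ico (0:ℝ) 1,
        ‖F' (ustar + t • v) v - F' ustar v‖ ≤ L * ‖v‖ ^ 2 * t := by
      intro t ht
      have htI : t ∈ Set.Icc (0:ℝ) 1 := ⟨ht.1, ht.2.le⟩
      have h1 : ‖F' (ustar + t • v) v - F' ustar v‖
          ≤ ‖F' (ustar + t • v) - F' ustar‖ * ‖v‖ := by
        simpa using (F' (ustar + t • v) - F' ustar).le_opNorm v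
      have h2 : ‖F' (ustar + t • v) - F' ustar‖ ≤ L * ‖ustar + t • v - ustar‖ := by
        simpa using hLip _ (hmem t htI) _ (mem_ball_self hr)
      have h3 : ‖ustar + t • v - ustar‖ = t * ‖v‖ := by
        rw [add_sub_cancel_left, norm_smul, Real.norm_of_nonneg ht.1]
      calc ‖F' (ustar + t • v) v - F' ustar v‖
          ≤ L * ‖ustar + t • v - ustar‖ * ‖v‖ := h1.trans (by
            exact mul_le_mul_of_nonneg_right h2 (norm_nonneg v))
        _ = L * ‖v‖ ^ 2 * t := by rw [h3]; ring
    have hga : ‖g 0‖ ≤ L * ‖v‖ ^ 2 * 0 ^ 2 / 2 := by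
      simp [hg, hFstar]
    exact image_norm_le_of_norm_deriv_right_le_deriv_boundary hcont
      (fun t ht => (hgderiv t ⟨ht.1, ht.2.le⟩).hasDerivWithinAt) hga hB hbound
      (Set.right_mem_Icc.mpr zero_le_one)
  have hg1 : g 1 = -(F' ustar v) := by
    simp [hg, hv, hFhat]
  have hFv : ‖F' ustar v‖ ≤ L * ‖v‖ ^ 2 / 2 := by
    rw [hg1, norm_neg] at key
    linarith [key]
  have hvA : v = A (F' ustar v) := by
    have := congrArg (fun T : X →L[ℝ] X => T v) hinvL
    simpa using this.symm
  have hMpos : 0 < M := by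
    by_contra hM
    push_neg at hM
    have : ‖A‖ ≤ 0 := hAnorm.trans hM
    have hA0 : A = 0 := by
      ext x; simpa using (norm_le_zero_iff.mp this) ▸ (by
        have := A.le_opNorm x
        have : ‖A x‖ ≤ 0 := by nlinarith [norm_nonneg x, A.le_opNorm x]
        simpa using norm_le_zero_iff.mp this)
    rw [hA0] at hvA
    exact hvne (by simpa using hvA)
  have hnv : ‖v‖ ≤ M * (L * ‖v‖ ^ 2 / 2) := by
    calc ‖v‖ = ‖A (F' ustar v)‖ := by rw [← hvA]
      _ ≤ ‖A‖ * ‖F' ustar v‖ := A.le_opNorm _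
      _ ≤ M * (L * ‖v‖ ^ 2 / 2) := by
          apply mul_le_mul hAnorm hFv (norm_nonneg _) (le_of_lt hMpos)
  have h2LM : ‖v‖ < 2 / (L * M) := lt_of_lt_of_le hvρ (hρ.trans (min_le_right _ _))
  have hLM : 0 < L * M := mul_pos hL hMpos
  have : 2 / (L * M) ≤ ‖v‖ := by
    rw [div_le_iff₀ hLM]
    nlinarith [hnv, hvpos]
  linarith
end
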